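/- Let λ₁, λ₂ ≥ 0 with λ₂ > 0, and define Ω on symmetric d×d real matrices by Ω(B) = λ₁ tr B + (λ₂/2)‖B‖_F² if B is positive semi-definite and Ω(B) = +∞ otherwise. Then the Fenchel conjugate of Ω (with respect to the Frobenius inner product on symmetric matrices) satisfies Ω*(B) = (1/(2λ₂)) ‖[B − λ₁ I]₊‖_F², where [M]₊ denotes the positive part of M (replacing negative eigenvalues by zero in an eigendecomposition). -/

import Mathlib

open Matrix
private lemma frob_trace' {d : ℕ} (X Y : Matrix (Fin d) (Fin d) ℝ) (hY : Y.IsSymm) :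
    ∑ i, ∑ j, X i j * Y i j = (X * Y).trace := by
  simp only [trace, diag_apply, mul_apply]
  exact Finset.sum_congr rfl fun i _ => Finset.sum_congr rfl fun j _ => by rw [hY.apply]

private lemma psd_trace_nonneg' {d : ℕ} {M : Matrix (Fin d) (Fin d) ℝ} (hM : M.PosSemidef) :
    0 ≤ M.trace := by
  refine Finset.sum_nonneg fun i _ => ?_
  exact hM.diag_nonneg

open scoped MatrixOrder in
private lemma trace_mul_psd_nonneg' {d : ℕ} {X Y : Matrix (Fin d) (Fin d) ℝ}
    (hX : X.PosSemidef) (hY : Y.PosSemidef) : 0 ≤ (X * Y).trace := by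
  have hXn : 0 ≤ X := hX.nonneg
  have hS : (CFC.sqrt X).PosSemidef := (CFC.sqrt_nonneg X).posSemidef
  rw [← CFC.sqrt_mul_sqrt_self X hXn, Matrix.mul_assoc, trace_mul_comm]
  have h3 : CFC.sqrt X * Y * (CFC.sqrt X)ᴴ = CFC.sqrt X * Y * CFC.sqrt X := by rw [hS.1]
  exact psd_trace_nonneg' (h3 ▸ hY.mul_mul_conjTranspose_same (CFC.sqrt X))

private lemma cfc_psd' {d : ℕ} {C : Matrix (Fin d) (Fin d) ℝ} (hC : C.IsHermitian)
    {f : ℝ → ℝ} (hf : ∀ x, 0 ≤ f x) : (cfc f C).PosSemidef := by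
  rw [hC.cfc_eq, Matrix.IsHermitian.cfc, Unitary.conjStarAlgAut_apply, star_eq_conjTranspose]
  exact (Matrix.PosSemidef.diagonal (by intro i; simpa using hf _)).mul_mul_conjTranspose_same _

private lemma herm_symm' {d : ℕ} {M : Matrix (Fin d) (Fin d) ℝ} (h : M.IsHermitian) : M.IsSymm := by
  rwa [Matrix.IsHermitian, conjTranspose_eq_transpose_of_trivial] at h

private lemma symm_herm' {d : ℕ} {M : Matrix (Fin d) (Fin d) ℝ} (h : M.IsSymm) : M.IsHermitian := by
  rwa [Matrix.IsHermitian, conjTranspose_eq_transpose_of_trivial]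

private lemma psd_smul' {d : ℕ} {M : Matrix (Fin d) (Fin d) ℝ} {c : ℝ} (hc : 0 ≤ c)
    (hM : M.PosSemidef) : (c • M).PosSemidef := by
  refine ⟨?_, fun x => ?_⟩
  · rw [Matrix.IsHermitian, conjTranspose_smul, star_trivial, hM.1.eq]
  · exact (hM.smul hc).2 x

/-- Fenchel conjugate of `Ω(A) = λ₁ tr A + (λ₂/2)‖A‖_F²` (on PSD symmetric
matrices, `+∞` elsewhere): `Ω*(B) = (1/(2λ₂)) ‖[B − λ₁ I]₊‖_F²`, where `[M]₊` is the
positive part (via continuous functional calculus). -/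
theorem stmt3 {d : ℕ} (lam1 lam2 : ℝ) (h1 : 0 ≤ lam1) (h2 : 0 < lam2)
    (B : Matrix (Fin d) (Fin d) ℝ) (hB : B.IsSymm) :
    (⨆ A : {A : Matrix (Fin d) (Fin d) ℝ // A.IsSymm ∧ A.PosSemidef},
        (∑ i, ∑ j, (A : Matrix (Fin d) (Fin d) ℝ) i j * B i j)
          - (lam1 * (A : Matrix (Fin d) (Fin d) ℝ).trace
              + lam2 / 2 * ∑ i, ∑ j, ((A : Matrix (Fin d) (Fin d) ℝ) i j) ^ 2)) =
      1 / (2 * lam2) *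
        ∑ i, ∑ j, ((cfc (fun x : ℝ => max x 0) (B - lam1 • (1 : Matrix (Fin d) (Fin d) ℝ))) i j) ^ 2 := by
  set C : Matrix (Fin d) (Fin d) ℝ := B - lam1 • 1 with hCdef
  have hCs : C.IsSymm := by
    rw [Matrix.IsSymm, hCdef, transpose_sub, transpose_smul, transpose_one, hB]
  have hC : C.IsHermitian := symm_herm' hCs
  set P : Matrix (Fin d) (Fin d) ℝ := cfc (fun x : ℝ => max x 0) C with hPdef
  have hPh : P.IsHermitian := cfc_predicate _ C
  have hPs : P.IsSymm := herm_symm' hPh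
  have hPpsd : P.PosSemidef := cfc_psd' hC fun x => le_max_right x 0
  -- N = P - C is PSD
  have hNpsd : (P - C).PosSemidef := by
    have : cfc (fun x : ℝ => max x 0 - x) C = P - C := by
      rw [cfc_sub (fun x : ℝ => max x 0) (fun x : ℝ => x) C,
        show (cfc (fun x : ℝ => x) C) = C from cfc_id' ℝ C hC]
    rw [← this]
    exact cfc_psd' hC fun x => by simp [sub_nonneg, le_max_left]
  -- P * C = P * P
  have hPC : P * C = P * P := by
    have e1 : (fun x : ℝ => max x 0 * x) = fun x : ℝ => max x 0 * max x 0 := by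
      funext x
      rcases le_total x 0 with h | h
      · simp [max_eq_right h]
      · simp [max_eq_left h]
    calc P * C = cfc (fun x : ℝ => max x 0 * x) C := by
          rw [cfc_mul (fun x : ℝ => max x 0) (fun x : ℝ => x) C,
            show (cfc (fun x : ℝ => x) C) = C from cfc_id' ℝ C hC]
      _ = cfc (fun x : ℝ => max x 0 * max x 0) C := by rw [e1]
      _ = P * P := cfc_mul (fun x : ℝ => max x 0) (fun x : ℝ => max x 0) C
  -- linearization of the trace term
  have keySum : ∀ A : Matrix (Fin d) (Fin d) ℝ,
      ∑ i, ∑ j, A i j * C i j = (∑ i, ∑ j, A i j * B i j) - lam1 * A.trace := by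
    intro A
    simp only [hCdef, Matrix.sub_apply, Matrix.smul_apply, one_apply, smul_eq_mul, mul_sub,
      Finset.sum_sub_distrib, mul_ite, mul_one, mul_zero, Finset.sum_ite_eq',
      Finset.mem_univ, if_true, trace, diag_apply, Finset.mul_sum]
    congr 1
    refine Finset.sum_congr rfl fun i _ => ?_
    rw [Finset.sum_ite_eq]
    simp [mul_comm]
  set T : ℝ := ∑ i, ∑ j, P i j ^ 2 with hT
  -- upper bound
  have ub : ∀ A : {A : Matrix (Fin d) (Fin d) ℝ // A.IsSymm ∧ A.PosSemidef},
      (∑ i, ∑ j, (A : Matrix (Fin d) (Fin d) ℝ) i j * B i j)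
          - (lam1 * (A : Matrix (Fin d) (Fin d) ℝ).trace
              + lam2 / 2 * ∑ i, ∑ j, ((A : Matrix (Fin d) (Fin d) ℝ) i j) ^ 2)
        ≤ 1 / (2 * lam2) * T := by
    rintro ⟨A, hAs, hApsd⟩
    simp only
    have e2 : (∑ i, ∑ j, A i j * B i j) - (lam1 * A.trace + lam2 / 2 * ∑ i, ∑ j, A i j ^ 2)
        = (∑ i, ∑ j, A i j * C i j) - lam2 / 2 * ∑ i, ∑ j, A i j ^ 2 := by
      rw [keySum A]; ring
    rw [e2]
    have step1 : ∑ i, ∑ j, A i j * C i j ≤ ∑ i, ∑ j, A i j * P i j := by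
      have hdiff : (∑ i, ∑ j, A i j * P i j) - ∑ i, ∑ j, A i j * C i j
          = (A * (P - C)).trace := by
        rw [← frob_trace' A (P - C) (by
          rw [Matrix.IsSymm, transpose_sub, hPs, hCs])]
        simp [Matrix.sub_apply, mul_sub, Finset.sum_sub_distrib]
      have := trace_mul_psd_nonneg' hApsd hNpsd
      linarith [hdiff ▸ this]
    have step2 : (∑ i, ∑ j, A i j * P i j) - lam2 / 2 * ∑ i, ∑ j, A i j ^ 2
        ≤ 1 / (2 * lam2) * T := by
      rw [hT]
      simp only [Finset.mul_sum]
      rw [← Finset.sum_sub_distrib]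
      refine Finset.sum_le_sum fun i _ => ?_
      rw [← Finset.sum_sub_distrib]
      refine Finset.sum_le_sum fun j _ => ?_
      have key : 1 / (2 * lam2) * P i j ^ 2 - (A i j * P i j - lam2 / 2 * A i j ^ 2)
          = (P i j - lam2 * A i j) ^ 2 / (2 * lam2) := by
        field_simp
        ring
      have : (0:ℝ) ≤ (P i j - lam2 * A i j) ^ 2 / (2 * lam2) := by positivity
      linarith [key ▸ this]
    linarith
  haveI : Nonempty {A : Matrix (Fin d) (Fin d) ℝ // A.IsSymm ∧ A.PosSemidef} :=
    ⟨⟨0, Matrix.isSymm_zero, Matrix.PosSemidef.zero⟩⟩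
  refine le_antisymm (ciSup_le ub) ?_
  -- lower bound via A₀ = lam2⁻¹ • P
  have hA0 : (lam2⁻¹ • P).IsSymm ∧ (lam2⁻¹ • P).PosSemidef :=
    ⟨by rw [Matrix.IsSymm, transpose_smul, hPs], psd_smul' (by positivity) hPpsd⟩
  have hSPC : ∑ i, ∑ j, P i j * C i j = T := by
    rw [frob_trace' P C hCs, hPC, ← frob_trace' P P hPs, hT]
    exact Finset.sum_congr rfl fun i _ => Finset.sum_congr rfl fun j _ => (sq (P i j)).symm ▸ by ring
  have hval : (∑ i, ∑ j, (lam2⁻¹ • P) i j * B i j)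
          - (lam1 * (lam2⁻¹ • P).trace
              + lam2 / 2 * ∑ i, ∑ j, ((lam2⁻¹ • P) i j) ^ 2)
      = 1 / (2 * lam2) * T := by
    have e3 : (∑ i, ∑ j, (lam2⁻¹ • P) i j * B i j) - lam1 * (lam2⁻¹ • P).trace
        = ∑ i, ∑ j, (lam2⁻¹ • P) i j * C i j := (keySum _).symm
    rw [sub_add_eq_sub_sub, e3]
    have e4 : ∑ i, ∑ j, (lam2⁻¹ • P) i j * C i j = lam2⁻¹ * T := by
      rw [← hSPC, Finset.mul_sum]
      exact Finset.sum_congr rfl fun i _ => by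
        rw [Finset.mul_sum]
        exact Finset.sum_congr rfl fun j _ => by simp [Matrix.smul_apply]; ring
    have e5 : ∑ i, ∑ j, ((lam2⁻¹ • P) i j) ^ 2 = lam2⁻¹ ^ 2 * T := by
      rw [hT, Finset.mul_sum]
      exact Finset.sum_congr rfl fun i _ => by
        rw [Finset.mul_sum]
        exact Finset.sum_congr rfl fun j _ => by simp [Matrix.smul_apply]; ring
    rw [e4, e5]
    field_simp
    ring
  calc 1 / (2 * lam2) * T = _ := hval.symm
    _ ≤ _ := le_ciSup ⟨1 / (2 * lam2) * T, by rintro x ⟨A, rfl⟩; exact ub A⟩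
        (⟨lam2⁻¹ • P, hA0⟩ : {A : Matrix (Fin d) (Fin d) ℝ // A.IsSymm ∧ A.PosSemidef})
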